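/- Deleting a vertex of degree at most 2k+2 from a maximal (k+2)-quasiplanar convex geometric representation yields a maximal (k+2)-quasiplanar convex geometric representation on the remaining vertices: if E is maximal (k+2)-quasiplanar on a cyclically ordered vertex set V and v ∈ V has degree at most 2k+2 in E, then the set of edges of E not containing v is maximal (k+2)-quasiplanar on V \ {v} (with the induced cyclic order). -/

import Mathlib

open Finset
open scoped Classical

variable {n : ℕ}

/-- The open cyclic arc from `i` to `j` (going in the positive direction), excluding both. -/
def Arc [NeZero n] (i j : ZMod n) : Finset (ZMod n) :=
  univ.filter fun t => 0 < (t - i).val ∧ (t - i).val < (j - i).val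

/-- Number of bars on the open arc from `i` to `j` strictly longer than the shorter of `i, j`. -/
noncomputable def exceedCount [NeZero n] (ℓ : ZMod n → ℝ) (i j : ZMod n) : ℕ :=
  ((Arc i j).filter fun t => min (ℓ i) (ℓ j) < ℓ t).card

/-- The cylindrical semi-bar `k`-visibility graph: `i ≠ j` are adjacent iff on one of the two
open cyclic arcs between them at most `k` bars are longer than `min (ℓ i) (ℓ j)`. -/
noncomputable def CylGraph (k : ℕ) [NeZero n] (ℓ : ZMod n → ℝ) : SimpleGraph (ZMod n) where
  Adj i j := i ≠ j ∧ (exceedCount ℓ i j ≤ k ∨ exceedCount ℓ j i ≤ k)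
  symm := ⟨fun i j h => ⟨h.1.symm, h.2.symm⟩⟩
  loopless := ⟨fun i h => h.1 rfl⟩

noncomputable instance (k : ℕ) [NeZero n] (ℓ : ZMod n → ℝ) :
    DecidableRel (CylGraph k ℓ).Adj := Classical.decRel _

/-- Two chords `{a,b}` and `{c,d}` with all four endpoints distinct cross iff exactly one of
`c, d` lies on the open cyclic arc from `a` to `b`. -/
def Crosses [NeZero n] (a b c d : ZMod n) : Prop :=
  a ≠ b ∧ c ≠ d ∧ a ≠ c ∧ a ≠ d ∧ b ≠ c ∧ b ≠ d ∧
    Xor' (c ∈ Arc a b) (d ∈ Arc a b)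

/-- A convex geometric representation (edges drawn as chords of the cyclic order on `ZMod n`)
is `m`-quasiplanar if it has no `m` pairwise crossing edges. -/
def QuasiPlanar (m : ℕ) [NeZero n] (G : SimpleGraph (ZMod n)) : Prop :=
  ¬ ∃ f g : Fin m → ZMod n, (∀ p, G.Adj (f p) (g p)) ∧
      ∀ p q, p ≠ q → Crosses (f p) (g p) (f q) (g q)

/-- Maximality: adding any absent chord creates `m` pairwise crossing edges. -/
def MaximalQP (m : ℕ) [NeZero n] (G : SimpleGraph (ZMod n)) : Prop :=
  ∀ a b : ZMod n, a ≠ b → ¬ G.Adj a b →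
    ¬ QuasiPlanar m (G ⊔ SimpleGraph.fromEdgeSet {s(a, b)})

/-- The representation obtained by deleting the vertex `v` and all edges through it. -/
def Del [NeZero n] (G : SimpleGraph (ZMod n)) (v : ZMod n) : SimpleGraph (ZMod n) where
  Adj a b := G.Adj a b ∧ a ≠ v ∧ b ≠ v
  symm := ⟨fun a b h => ⟨h.1.symm, h.2.2, h.2.1⟩⟩
  loopless := ⟨fun a h => G.loopless.irrefl a h.1⟩

section helper
variable [NeZero n]

lemma mem_Arc' {i j t : ZMod n} :
    t ∈ Arc i j ↔ 0 < (t - i).val ∧ (t - i).val < (j - i).val := by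
  simp [Arc]

lemma val_sub_add {x y : ZMod n} (h : x ≠ y) : (y - x).val + (x - y).val = n := by
  have hz : y - x ≠ 0 := sub_ne_zero.mpr (Ne.symm h)
  have : NeZero (y - x) := ⟨hz⟩
  have h2 : (x - y) = -(y - x) := by ring
  have hpos : (y - x).val ≠ 0 := fun h0 => hz ((ZMod.val_eq_zero _).1 h0)
  have hlt := ZMod.val_lt (y - x)
  rw [h2, ZMod.val_neg_of_ne_zero]
  omega

lemma val_sub_pos {x y : ZMod n} (h : x ≠ y) : 0 < (y - x).val := by
  have hz : y - x ≠ 0 := sub_ne_zero.mpr (Ne.symm h)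
  have h1 : (y - x).val ≠ 0 := fun h0 => hz ((ZMod.val_eq_zero _).1 h0)
  omega

lemma card_Arc_le {x y : ZMod n} : (Arc x y).card ≤ (y - x).val - 1 := by
  have h : (Arc x y).card ≤ (Finset.Ioo 0 (y - x).val).card := by
    apply Finset.card_le_card_of_injOn (fun t => (t - x).val)
    · intro t ht
      rw [Finset.mem_coe, mem_Arc'] at ht
      simpa [Finset.mem_Ioo] using ht
    · intro t ht t' ht' hv
      have h2 : t - x = t' - x := ZMod.val_injective n hv
      exact sub_left_inj.mp h2
  simpa using h

lemma mem_Arc_flip {x y t : ZMod n} (hxy : x ≠ y) (htx : t ≠ x) (hty : t ≠ y) :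
    t ∈ Arc y x ↔ t ∉ Arc x y := by
  have hb := val_sub_add hxy             -- (y-x).val + (x-y).val = n
  have hab : (t - x).val ≠ (y - x).val := by
    intro h
    exact hty (sub_left_inj.mp (ZMod.val_injective n h))
  have ha0 : 0 < (t - x).val := val_sub_pos (Ne.symm htx)
  have hc0 : 0 < (t - y).val := val_sub_pos (Ne.symm hty)
  have hrel : ((y - x).val ≤ (t - x).val ∧ (t - y).val = (t - x).val - (y - x).val) ∨
      ((t - x).val < (y - x).val ∧ (t - y).val = n - ((y - x).val - (t - x).val)) := by
    rcases le_or_gt (y - x).val (t - x).val with h | h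
    · left
      refine ⟨h, ?_⟩
      have : t - y = (t - x) - (y - x) := by ring
      rw [this, ZMod.val_sub h]
    · right
      refine ⟨h, ?_⟩
      have h1 : y - t = (y - x) - (t - x) := by ring
      have h2 : (y - t).val = (y - x).val - (t - x).val := by rw [h1, ZMod.val_sub h.le]
      have h3 := val_sub_add hty
      omega
  have hlt := ZMod.val_lt (t - x)
  rw [mem_Arc', mem_Arc']
  omega

/-- Core pigeonhole: a family of `k+2` pairwise crossing chords cannot contain a chord `{x,y}`
whose arc from `x` to `y` is short. -/
lemma core {k : ℕ} (f g : Fin (k + 2) → ZMod n)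
    (hcr : ∀ p q, p ≠ q → Crosses (f p) (g p) (f q) (g q))
    (p₀ : Fin (k + 2)) (x y : ZMod n) (hxy : x ≠ y) (hv : (y - x).val ≤ k + 1)
    (hedge : (f p₀ = x ∧ g p₀ = y) ∨ (f p₀ = y ∧ g p₀ = x)) : False := by
  have hA : ∀ q, q ≠ p₀ → Xor' (f q ∈ Arc x y) (g q ∈ Arc x y) := by
    intro q hqp
    obtain ⟨h1, h2, h3, h4, h5, h6, h7⟩ := hcr p₀ q (Ne.symm hqp)
    rcases hedge with ⟨hf, hg⟩ | ⟨hf, hg⟩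
    · rwa [hf, hg] at h7
    · rw [hf] at h3 h4
      rw [hg] at h5 h6
      rw [hf, hg] at h7
      rw [mem_Arc_flip hxy (Ne.symm h5) (Ne.symm h3),
          mem_Arc_flip hxy (Ne.symm h6) (Ne.symm h4)] at h7
      exact xor_not_not.mp h7
  classical
  have hcard : (Arc x y).card ≤ k := by
    have h1 := card_Arc_le (x := x) (y := y)
    omega
  set A := Arc x y with hAdef
  set h : Fin (k + 2) → ZMod n := fun q => if f q ∈ A then f q else g q with hh
  have hmem : ∀ q ∈ univ.erase p₀, h q ∈ A := by
    intro q hq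
    have hx := hA q (Finset.ne_of_mem_erase hq)
    by_cases hfq : f q ∈ A
    · simpa [hh, hfq]
    · rcases hx with ⟨h1, _⟩ | ⟨h1, _⟩
      · exact absurd h1 hfq
      · simpa [hh, hfq]
  have hinj : Set.InjOn h (univ.erase p₀) := by
    intro q hq q' hq' heq
    by_contra hne
    obtain ⟨_, _, h3, h4, h5, h6, _⟩ := hcr q q' hne
    have e1 : h q = f q ∨ h q = g q := by
      by_cases hfq : f q ∈ A <;> simp [hh, hfq]
    have e2 : h q' = f q' ∨ h q' = g q' := by
      by_cases hfq : f q' ∈ A <;> simp [hh, hfq]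
    rcases e1 with e1 | e1 <;> rcases e2 with e2 | e2 <;>
      rw [e1, e2] at heq <;> [exact h3 heq; exact h4 heq; exact h5 heq; exact h6 heq]
  have hle := Finset.card_le_card_of_injOn h hmem hinj
  rw [Finset.card_erase_of_mem (Finset.mem_univ _), Finset.card_univ] at hle
  simp [Fintype.card_fin] at hle
  omega

/-- Chords to near vertices are always present in a maximal quasiplanar graph. -/
lemma near_adj {k : ℕ} {E : SimpleGraph (ZMod n)} (hq : QuasiPlanar (k + 2) E)
    (hmax : MaximalQP (k + 2) E) {x y : ZMod n} (hxy : x ≠ y)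
    (hv : (y - x).val ≤ k + 1) : E.Adj x y := by
  by_contra hn
  have h := hmax x y hxy hn
  rw [QuasiPlanar, not_not] at h
  obtain ⟨f, g, hadj, hcr⟩ := h
  by_cases hex : ∃ p, ¬ E.Adj (f p) (g p)
  · obtain ⟨p₀, hp⟩ := hex
    have h2 := hadj p₀
    rw [SimpleGraph.sup_adj, SimpleGraph.fromEdgeSet_adj] at h2
    rcases h2 with h2 | ⟨hs, hne⟩
    · exact hp h2
    · rw [Set.mem_singleton_iff, Sym2.eq_iff] at hs
      exact core f g hcr p₀ x y hxy hv hs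
  · push_neg at hex
    exact hq ⟨f, g, hex, hcr⟩

/-- Every neighbour of a vertex of degree at most `2k+2` is near. -/
lemma nbr_near {k : ℕ} {E : SimpleGraph (ZMod n)} (hq : QuasiPlanar (k + 2) E)
    (hmax : MaximalQP (k + 2) E) {v : ZMod n}
    (hd : (univ.filter fun u => E.Adj v u).card ≤ 2 * k + 2) {u : ZMod n}
    (hu : E.Adj v u) : (u - v).val ≤ k + 1 ∨ (v - u).val ≤ k + 1 := by
  by_contra hc
  push_neg at hc
  obtain ⟨h1, h2⟩ := hc
  have hvu : v ≠ u := hu.ne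
  have hsum : (u - v).val + (v - u).val = n := val_sub_add hvu
  have hn : 2 * k + 4 ≤ n := by omega
  classical
  set S : Finset (ZMod n) :=
    (((Finset.Icc 1 (k + 1)).image fun j : ℕ => v + (j : ZMod n)) ∪
      ((Finset.Icc 1 (k + 1)).image fun j : ℕ => v - (j : ZMod n))) ∪ {u} with hS
  have hvalj : ∀ j ∈ Finset.Icc 1 (k + 1), ((j : ZMod n)).val = j := by
    intro j hj
    rw [Finset.mem_Icc] at hj
    exact ZMod.val_cast_of_lt (by omega)
  have hjne : ∀ j ∈ Finset.Icc 1 (k + 1), (j : ZMod n) ≠ 0 := by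
    intro j hj h0
    have := hvalj j hj
    rw [h0, ZMod.val_zero] at this
    rw [Finset.mem_Icc] at hj
    omega
  have hsub : S ⊆ univ.filter fun w => E.Adj v w := by
    intro w hw
    rw [hS, Finset.mem_union, Finset.mem_union] at hw
    rw [Finset.mem_filter]
    refine ⟨Finset.mem_univ _, ?_⟩
    rcases hw with (hw | hw) | hw
    · obtain ⟨j, hj, rfl⟩ := Finset.mem_image.mp hw
      have hne : v ≠ v + (j : ZMod n) := by
        intro h
        exact hjne j hj (by linear_combination h.symm)
      apply near_adj hq hmax hne
      rw [add_sub_cancel_left]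
      rw [hvalj j hj]
      rw [Finset.mem_Icc] at hj
      omega
    · obtain ⟨j, hj, rfl⟩ := Finset.mem_image.mp hw
      have hne : v - (j : ZMod n) ≠ v := by
        intro h
        exact hjne j hj (by linear_combination -h)
      have := near_adj hq hmax hne (by
        rw [sub_sub_cancel, hvalj j hj]
        rw [Finset.mem_Icc] at hj
        omega)
      exact this.symm
    · rw [Finset.mem_singleton] at hw
      subst hw
      exact hu
  have hc1 : (((Finset.Icc 1 (k + 1)).image fun j : ℕ => v + (j : ZMod n))).card = k + 1 := by
    have hinj : Set.InjOn (fun j : ℕ => v + (j : ZMod n)) (Finset.Icc 1 (k + 1)) := by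
      intro j hj j' hj' he
      have hcast : (j : ZMod n) = (j' : ZMod n) := by linear_combination he
      have hv2 := hvalj j hj
      rw [hcast, hvalj j' hj'] at hv2
      omega
    rw [Finset.card_image_of_injOn hinj, Nat.card_Icc]
    omega
  have hc2 : (((Finset.Icc 1 (k + 1)).image fun j : ℕ => v - (j : ZMod n))).card = k + 1 := by
    have hinj : Set.InjOn (fun j : ℕ => v - (j : ZMod n)) (Finset.Icc 1 (k + 1)) := by
      intro j hj j' hj' he
      have hcast : (j : ZMod n) = (j' : ZMod n) := by linear_combination -he
      have hv2 := hvalj j hj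
      rw [hcast, hvalj j' hj'] at hv2
      omega
    rw [Finset.card_image_of_injOn hinj, Nat.card_Icc]
    omega
  have hdisj : Disjoint ((Finset.Icc 1 (k + 1)).image fun j : ℕ => v + (j : ZMod n))
      ((Finset.Icc 1 (k + 1)).image fun j : ℕ => v - (j : ZMod n)) := by
    rw [Finset.disjoint_left]
    intro w hw hw'
    obtain ⟨j, hj, rfl⟩ := Finset.mem_image.mp hw
    obtain ⟨j', hj', he⟩ := Finset.mem_image.mp hw'
    have hz : ((j + j' : ℕ) : ZMod n) = 0 := by push_cast; linear_combination -he
    rw [Finset.mem_Icc] at hj hj'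
    have hv2 := ZMod.val_cast_of_lt (show j + j' < n by omega)
    rw [hz, ZMod.val_zero] at hv2
    omega
  have hunotin : u ∉ (((Finset.Icc 1 (k + 1)).image fun j : ℕ => v + (j : ZMod n)) ∪
      ((Finset.Icc 1 (k + 1)).image fun j : ℕ => v - (j : ZMod n))) := by
    rw [Finset.mem_union]
    rintro (hw | hw)
    · obtain ⟨j, hj, he⟩ := Finset.mem_image.mp hw
      have : (u - v).val = j := by rw [← he, add_sub_cancel_left, hvalj j hj]
      rw [Finset.mem_Icc] at hj
      omega
    · obtain ⟨j, hj, he⟩ := Finset.mem_image.mp hw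
      have : (v - u).val = j := by rw [← he, sub_sub_cancel, hvalj j hj]
      rw [Finset.mem_Icc] at hj
      omega
  have hcardS : S.card = 2 * k + 3 := by
    rw [hS, Finset.card_union_of_disjoint (by simpa using hunotin),
      Finset.card_union_of_disjoint hdisj, hc1, hc2, Finset.card_singleton]
    ring
  have := Finset.card_le_card hsub
  omega
end helper


/-- deleting a vertex of degree at most `2k+2` from a maximal
`(k+2)`-quasiplanar convex geometric representation yields a representation on the remaining
vertices that is again `(k+2)`-quasiplanar and maximal (no chord between two remaining
vertices can be added without creating `k+2` pairwise crossing edges). -/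
theorem stmt14 (k : ℕ) [NeZero n] (E : SimpleGraph (ZMod n))
    (hq : QuasiPlanar (k + 2) E) (hmax : MaximalQP (k + 2) E) (v : ZMod n)
    (hd : (univ.filter fun u => E.Adj v u).card ≤ 2 * k + 2) :
    QuasiPlanar (k + 2) (Del E v) ∧
    ∀ a b : ZMod n, a ≠ v → b ≠ v → a ≠ b → ¬ (Del E v).Adj a b →
      ¬ QuasiPlanar (k + 2) ((Del E v) ⊔ SimpleGraph.fromEdgeSet {s(a, b)}) := by
  constructor
  · rw [QuasiPlanar]
    rintro ⟨f, g, hadj, hcr⟩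
    rw [QuasiPlanar] at hq
    exact hq ⟨f, g, fun p => (hadj p).1, hcr⟩
  · intro a b hav hbv hab hnadj hQP
    have hnE : ¬ E.Adj a b := fun h => hnadj ⟨h, hav, hbv⟩
    have h := hmax a b hab hnE
    rw [QuasiPlanar, not_not] at h
    obtain ⟨f, g, hadj, hcr⟩ := h
    have hEedge : ∀ p, E.Adj (f p) (g p) ∨ s(f p, g p) = s(a, b) := by
      intro p
      have hp := hadj p
      rw [SimpleGraph.sup_adj, SimpleGraph.fromEdgeSet_adj, Set.mem_singleton_iff] at hp
      tauto
    have hnotv : ∀ p, f p ≠ v ∧ g p ≠ v := by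
      intro p
      constructor
      · intro hfv
        have hEp : E.Adj v (g p) := by
          rcases hEedge p with h | h
          · rwa [hfv] at h
          · rw [Sym2.eq_iff] at h
            rcases h with ⟨h1, _⟩ | ⟨h1, _⟩ <;> rw [hfv] at h1
            · exact absurd h1.symm hav
            · exact absurd h1.symm hbv
        rcases nbr_near hq hmax hd hEp with h | h
        · exact absurd (core f g hcr p v (g p) hEp.ne h (Or.inl ⟨hfv, rfl⟩)) not_false
        · exact absurd (core f g hcr p (g p) v hEp.ne.symm h (Or.inr ⟨hfv, rfl⟩)) not_false
      · intro hgv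
        have hEp : E.Adj v (f p) := by
          rcases hEedge p with h | h
          · rw [hgv] at h; exact h.symm
          · rw [Sym2.eq_iff] at h
            rcases h with ⟨_, h2⟩ | ⟨_, h2⟩ <;> rw [hgv] at h2
            · exact absurd h2.symm hbv
            · exact absurd h2.symm hav
        rcases nbr_near hq hmax hd hEp with h | h
        · exact absurd (core f g hcr p v (f p) hEp.ne h (Or.inr ⟨rfl, hgv⟩)) not_false
        · exact absurd (core f g hcr p (f p) v hEp.ne.symm h (Or.inl ⟨rfl, hgv⟩)) not_false
    rw [QuasiPlanar] at hQP
    refine hQP ⟨f, g, fun p => ?_, hcr⟩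
    rw [SimpleGraph.sup_adj, SimpleGraph.fromEdgeSet_adj, Set.mem_singleton_iff]
    rcases hEedge p with h | h
    · exact Or.inl ⟨h, (hnotv p).1, (hnotv p).2⟩
    · exact Or.inr ⟨h, (hadj p).ne⟩
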